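/- Let g₀ : ℝ × ℤ × ℤ → Mat(m×m, ℂ) be an invertible solution of the semi-discrete chiral model equation (g₀ g₀_{,1}^{-1})_t + (g₀ g₀_{,2}^{-1})_{,1,-2} − g₀ g₀_{,2}^{-1} = 0. Let P, Q be n×n matrix functions with P_t = 0, P_{,2} = P, Q_t = 0, Q_{,2} = Q, and let ω̃ be an n×n matrix function with ω̃_{,2} = ω̃, ω̃_t = 0 and Q ω̃_{,1} = ω̃ P (so that γ₁ := ω̃ P − Q ω̃_{,1} = 0 and γ₂ := −ω̃_t = 0). Let θ (m×n) and η (n×m) be entrywise differentiable in t and satisfy θ_{,-2} = −(θ P)_{,-1} − g₀_{,-1} g₀^{-1} θ, θ_t = g₀ g₀_{,2}^{-1} θ_{,2}, η_{,2} = −Q η_{,1} − η g₀ g₀_{,1}^{-1}, η_t = −(η g₀)_{,-2} g₀^{-1}. Let Ω̃ be an invertible n×n matrix function, entrywise differentiable in t, satisfying Ω̃_{,2} − Ω̃ = η θ, Ω̃_{,1,-2} − (I + Q) Ω̃_{,1} + Ω̃ P + (η_{,1,-2} − η) θ_{,1,-2} = 0, and Ω̃_t = −η_t θ. If g := (I −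 θ Ω̃_{,2}^{-1} η) g₀ is invertible, then g also satisfies the semi-discrete chiral model equation (g g_{,1}^{-1})_t + (g g_{,2}^{-1})_{,1,-2} − g g_{,2}^{-1} = 0 (binary Darboux transformation). -/

import Mathlib

open Matrix

section MDsec
variable {p q r : ℕ} {t : ℝ}

def MD (t : ℝ) {p q : ℕ} (A : ℝ → Matrix (Fin p) (Fin q) ℂ) (Ad : Matrix (Fin p) (Fin q) ℂ) : Prop :=
  ∀ a b, HasDerivAt (fun s => A s a b) (Ad a b) t

theorem MD.mul {A : ℝ → Matrix (Fin p) (Fin q) ℂ} {B : ℝ → Matrix (Fin q) (Fin r) ℂ}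
    {Ad Bd} (hA : MD t A Ad) (hB : MD t B Bd) :
    MD t (fun s => A s * B s) (Ad * B t + A t * Bd) := by
  intro a b
  have h := HasDerivAt.fun_sum (u := Finset.univ)
    (A := fun c s => A s a c * B s c b)
    (A' := fun c => Ad a c * B t c b + A t a c * Bd c b)
    (fun c _ => (hA a c).mul (hB c b))
  simp only [Matrix.mul_apply, Matrix.add_apply, Finset.sum_add_distrib] at h ⊢
  exact h

theorem MD.sub {A B : ℝ → Matrix (Fin p) (Fin q) ℂ} {Ad Bd}
    (hA : MD t A Ad) (hB : MD t B Bd) :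
    MD t (fun s => A s - B s) (Ad - Bd) := by
  intro a b
  exact (hA a b).sub (hB a b)

theorem MD.const (C : Matrix (Fin p) (Fin q) ℂ) : MD t (fun _ => C) 0 := by
  intro a b
  simpa using hasDerivAt_const t (C a b)

theorem MD.diffAt {A : ℝ → Matrix (Fin p) (Fin q) ℂ} {Ad} (hA : MD t A Ad) (a b) :
    DifferentiableAt ℝ (fun s => A s a b) t := (hA a b).differentiableAt

theorem det_diffAt {A : ℝ → Matrix (Fin p) (Fin p) ℂ}
    (h : ∀ a b, DifferentiableAt ℝ (fun s => A s a b) t) :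
    DifferentiableAt ℝ (fun s => (A s).det) t := by
  have : (fun s => (A s).det)
      = fun s => ∑ σ : Equiv.Perm (Fin p), ((Equiv.Perm.sign σ : ℤ) : ℂ) * ∏ i, A s (σ i) i := by
    funext s
    simp [Matrix.det_apply, Units.smul_def, zsmul_eq_mul]
  rw [this]
  apply DifferentiableAt.fun_sum
  intro σ _
  exact (DifferentiableAt.fun_finsetProd (fun i _ => h (σ i) i)).const_mul _

theorem inv_entry_diffAt {A : ℝ → Matrix (Fin p) (Fin p) ℂ}
    (hU : ∀ s, IsUnit (A s)) (h : ∀ a b, DifferentiableAt ℝ (fun s => A s a b) t) (a b) :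
    DifferentiableAt ℝ (fun s => (A s)⁻¹ a b) t := by
  have hd : ∀ s, (A s)⁻¹ a b = ((A s).det)⁻¹ * ((A s).updateRow b (Pi.single a 1)).det := by
    intro s
    rw [Matrix.inv_def, Matrix.smul_apply, Matrix.adjugate_apply, Ring.inverse_eq_inv',
      smul_eq_mul]
  simp only [hd]
  have hdet : DifferentiableAt ℝ (fun s => (A s).det) t := det_diffAt h
  have hne : (A t).det ≠ 0 := by
    have := (Matrix.isUnit_iff_isUnit_det _).mp (hU t)
    exact IsUnit.ne_zero this
  refine (hdet.inv hne).mul (det_diffAt ?_)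
  intro i j
  simp only [Matrix.updateRow_apply]
  by_cases hib : i = b <;> simp [hib, differentiableAt_const, h i j]

theorem MD.inv {A : ℝ → Matrix (Fin p) (Fin p) ℂ} {Ad}
    (hU : ∀ s, IsUnit (A s)) (hA : MD t A Ad) :
    MD t (fun s => (A s)⁻¹) (-((A t)⁻¹ * Ad * (A t)⁻¹)) := by
  classical
  set Bd : Matrix (Fin p) (Fin p) ℂ := Matrix.of (fun a b => deriv (fun s => (A s)⁻¹ a b) t) with hBd
  have hB : MD t (fun s => (A s)⁻¹) Bd := by
    intro a b
    exact (inv_entry_diffAt hU (fun a b => (hA a b).differentiableAt) a b).hasDerivAt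
  have hone : MD t (fun _ : ℝ => (1 : Matrix (Fin p) (Fin p) ℂ)) 0 := MD.const 1
  have hprod : MD t (fun s => A s * (A s)⁻¹) (Ad * (A t)⁻¹ + A t * Bd) := hA.mul hB
  have heq : (fun s => A s * (A s)⁻¹) = fun _ : ℝ => (1 : Matrix (Fin p) (Fin p) ℂ) := by
    funext s
    exact Matrix.mul_nonsing_inv _ ((Matrix.isUnit_iff_isUnit_det _).mp (hU s))
  rw [heq] at hprod
  have hzero : Ad * (A t)⁻¹ + A t * Bd = 0 := by
    ext a b
    exact (hprod a b).unique (hone a b)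
  have hAinv : (A t)⁻¹ * A t = 1 := Matrix.nonsing_inv_mul _ ((Matrix.isUnit_iff_isUnit_det _).mp (hU t))
  have hBd' : Bd = -((A t)⁻¹ * Ad * (A t)⁻¹) := by
    have h1 : A t * Bd = -(Ad * (A t)⁻¹) := by
      rw [eq_neg_iff_add_eq_zero, add_comm]; exact hzero
    calc Bd = ((A t)⁻¹ * A t) * Bd := by rw [hAinv, Matrix.one_mul]
    _ = (A t)⁻¹ * (A t * Bd) := by rw [Matrix.mul_assoc]
    _ = (A t)⁻¹ * -(Ad * (A t)⁻¹) := by rw [h1]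
    _ = -((A t)⁻¹ * Ad * (A t)⁻¹) := by rw [Matrix.mul_neg, Matrix.mul_assoc]
  rw [← hBd']
  exact hB

end MDsec

theorem inv_pair (m n : ℕ) (a1 a1i : Matrix (Fin m) (Fin m) ℂ)
    (W1 Om1 W1i Om1i : Matrix (Fin n) (Fin n) ℂ)
    (th1 : Matrix (Fin m) (Fin n) ℂ) (e1 : Matrix (Fin n) (Fin m) ℂ)
    (ia1r : a1 * a1i = 1) (iW1l : W1i * W1 = 1) (iOm1r : Om1 * Om1i = 1)
    (r6 : W1 - Om1 = e1 * th1) :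
    ((1 - th1 * W1i * e1) * a1) * (a1i * (1 + th1 * Om1i * e1)) = 1 := by
  have h1 : ∀ (c : ℕ) (M : Matrix (Fin n) (Fin c) ℂ),
      e1 * (th1 * M) = W1 * M - Om1 * M := by
    intro c M; rw [← Matrix.mul_assoc, ← r6, Matrix.sub_mul]
  have cW1l : ∀ (c : ℕ) (M : Matrix (Fin n) (Fin c) ℂ), W1i * (W1 * M) = M := by
    intro c M; rw [← Matrix.mul_assoc, iW1l, Matrix.one_mul]
  have cOm1r : ∀ (c : ℕ) (M : Matrix (Fin n) (Fin c) ℂ), Om1 * (Om1i * M) = M := by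
    intro c M; rw [← Matrix.mul_assoc, iOm1r, Matrix.one_mul]
  have ca1r : ∀ (c : ℕ) (M : Matrix (Fin m) (Fin c) ℂ), a1 * (a1i * M) = M := by
    intro c M; rw [← Matrix.mul_assoc, ia1r, Matrix.one_mul]
  simp only [Matrix.mul_add, Matrix.add_mul, Matrix.mul_sub, Matrix.sub_mul,
    Matrix.mul_one, Matrix.one_mul, Matrix.mul_neg, Matrix.neg_mul, Matrix.mul_assoc,
    h1, cW1l, cOm1r, ca1r, ia1r]
  abel

theorem inv_pair' (m n : ℕ) (a1 a1i : Matrix (Fin m) (Fin m) ℂ)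
    (W1 Om1 W1i Om1i : Matrix (Fin n) (Fin n) ℂ)
    (th1 : Matrix (Fin m) (Fin n) ℂ) (e1 : Matrix (Fin n) (Fin m) ℂ)
    (ia1l : a1i * a1 = 1) (iW1r : W1 * W1i = 1) (iOm1l : Om1i * Om1 = 1)
    (r6 : W1 - Om1 = e1 * th1) :
    (a1i * (1 + th1 * Om1i * e1)) * ((1 - th1 * W1i * e1) * a1) = 1 := by
  have h1 : ∀ (c : ℕ) (M : Matrix (Fin n) (Fin c) ℂ),
      e1 * (th1 * M) = W1 * M - Om1 * M := by
    intro c M; rw [← Matrix.mul_assoc, ← r6, Matrix.sub_mul]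
  have cW1r : ∀ (c : ℕ) (M : Matrix (Fin n) (Fin c) ℂ), W1 * (W1i * M) = M := by
    intro c M; rw [← Matrix.mul_assoc, iW1r, Matrix.one_mul]
  have cOm1l : ∀ (c : ℕ) (M : Matrix (Fin n) (Fin c) ℂ), Om1i * (Om1 * M) = M := by
    intro c M; rw [← Matrix.mul_assoc, iOm1l, Matrix.one_mul]
  have ca1l : ∀ (c : ℕ) (M : Matrix (Fin m) (Fin c) ℂ), a1i * (a1 * M) = M := by
    intro c M; rw [← Matrix.mul_assoc, ia1l, Matrix.one_mul]
  simp only [Matrix.mul_add, Matrix.add_mul, Matrix.mul_sub, Matrix.sub_mul,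
    Matrix.mul_one, Matrix.one_mul, Matrix.mul_neg, Matrix.neg_mul, Matrix.mul_assoc,
    h1, cW1r, cOm1l, ca1l, ia1l]
  abel

theorem cancel_right {p : ℕ} (B K : Matrix (Fin p) (Fin p) ℂ) (hBK : B * K = 1)
    {X Y : Matrix (Fin p) (Fin p) ℂ} (h : X * B = Y * B) : X = Y := by
  have h2 := congrArg (fun Z => Z * K) h
  simpa only [Matrix.mul_assoc, hBK, Matrix.mul_one] using h2

set_option maxHeartbeats 2000000 in
theorem key_alg' (m n : ℕ)
    (a a1 a2 a' am ai a1i a2i a12i a'i Gd Gd1 : Matrix (Fin m) (Fin m) ℂ)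
    (W W1 Om0 Om1 Om' Wi W1i Om1i P Q : Matrix (Fin n) (Fin n) ℂ)
    (th th1 th2 th12 th' : Matrix (Fin m) (Fin n) ℂ)
    (e e1 e2 e' em : Matrix (Fin n) (Fin m) ℂ)
    (iWl : Wi * W = 1)
    (iW1l : W1i * W1 = 1) (iW1r : W1 * W1i = 1)
    (iOm1l : Om1i * Om1 = 1) (iOm1r : Om1 * Om1i = 1)
    (ial : ai * a = 1)
    (ia1 : a1i * a1 = 1) (ia1r : a1 * a1i = 1)
    (ia2 : a2i * a2 = 1) (ia' : a'i * a' = 1)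
    (r1 : e2 = -(Q * e1) - e * (a * a1i))
    (r2 : e = -(Q * e') - em * (am * a'i))
    (r3 : th' = -(th * P) - a * (a1i * th1))
    (r4 : th1 = -(th2 * P) - a2 * (a12i * th12))
    (r5 : W - Om0 = e * th)
    (r6 : W1 - Om1 = e1 * th1)
    (r7 : Om1 - Om' = e' * th')
    (r9 : Om' - (1 + Q) * Om1 + Om0 * P + (e' - e) * th' = 0)
    (hGd : Gd = a * (a1i * Gd1) + (a * (a2i * a1) - a')) :
    (((0 - ((a * a2i * th2 * Wi + th * -(Wi * -(-((e * a) * a2i) * th2) * Wi)) * e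
          + th * Wi * -((em * am) * ai))) * a + (1 - th * Wi * e) * Gd)
        * (a1i * (1 + th1 * Om1i * e1))
      + ((1 - th * Wi * e) * a)
        * -((a1i * (1 + th1 * Om1i * e1))
            * ((0 - ((a1 * a12i * th12 * W1i + th1 * -(W1i * -(-((e1 * a1) * a12i) * th12) * W1i)) * e1
                  + th1 * W1i * -((e' * a') * a1i))) * a1 + (1 - th1 * W1i * e1) * Gd1)
            * (a1i * (1 + th1 * Om1i * e1))))
      * ((1 - th1 * W1i * e1) * a1)
    = (((1 - th * Wi * e) * a) * (a2i * (1 + th2 * Wi * e2))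
        - ((1 - th' * Om1i * e') * a') * (a1i * (1 + th1 * Om1i * e1)))
      * ((1 - th1 * W1i * e1) * a1) := by
  have h1 : ∀ (c : ℕ) (M : Matrix (Fin n) (Fin c) ℂ),
      e1 * (th1 * M) = W1 * M - Om1 * M := by
    intro c M; rw [← Matrix.mul_assoc, ← r6, Matrix.sub_mul]
  have h2 : ∀ (c : ℕ) (M : Matrix (Fin n) (Fin c) ℂ),
      e * (th * M) = W * M - Om0 * M := by
    intro c M; rw [← Matrix.mul_assoc, ← r5, Matrix.sub_mul]
  have r4' : a2 * (a12i * th12) = -(th2 * P) - th1 := by rw [r4]; abel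
  have h3 : ∀ (c : ℕ) (M : Matrix (Fin n) (Fin c) ℂ),
      a12i * (th12 * M) = -(a2i * (th1 * M)) - a2i * (th2 * (P * M)) := by
    intro c M
    calc a12i * (th12 * M) = a2i * (a2 * (a12i * (th12 * M))) := by
          rw [← Matrix.mul_assoc a2i a2, ia2, Matrix.one_mul]
      _ = a2i * ((a2 * (a12i * th12)) * M) := by
          rw [Matrix.mul_assoc, Matrix.mul_assoc]
      _ = a2i * ((-(th2 * P) - th1) * M) := by rw [r4']
      _ = -(a2i * (th1 * M)) - a2i * (th2 * (P * M)) := by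
          simp only [Matrix.sub_mul, Matrix.neg_mul, Matrix.mul_sub, Matrix.mul_neg,
            Matrix.mul_assoc]
          abel
  have L1 : Q * Om1 = Om0 * P - e * th' := by
    have h := r9
    simp only [Matrix.add_mul, Matrix.sub_mul, Matrix.one_mul] at h
    have h7 : Om' = Om1 - e' * th' := by rw [← r7]; abel
    rw [h7] at h
    have hh : Q * Om1 - (Om0 * P - e * th')
        = -(Om1 - e' * th' - (Om1 + Q * Om1) + Om0 * P + (e' * th' - e * th')) := by abel
    rw [h, neg_zero] at hh
    exact sub_eq_zero.mp hh
  have h4 : ∀ (c : ℕ) (M : Matrix (Fin n) (Fin c) ℂ),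
      Q * (Om1 * M) = Om0 * (P * M) - e * (th' * M) := by
    intro c M
    rw [← Matrix.mul_assoc, L1, Matrix.sub_mul, Matrix.mul_assoc, Matrix.mul_assoc]
  have h5 : e * a' = -(Q * (e' * a')) - em * am := by
    rw [r2]
    simp only [Matrix.sub_mul, Matrix.neg_mul, Matrix.mul_assoc, ia', Matrix.mul_one]
  have h6 : Q * (e' * a') = Om0 * (P * (Om1i * (e' * a'))) - e * (th' * (Om1i * (e' * a'))) := by
    have h := h4 _ (Om1i * (e' * a'))
    rwa [← Matrix.mul_assoc Om1 Om1i, iOm1r, Matrix.one_mul] at h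
  have cW : ∀ (c : ℕ) (M : Matrix (Fin n) (Fin c) ℂ), Wi * (W * M) = M := by
    intro c M; rw [← Matrix.mul_assoc, iWl, Matrix.one_mul]
  have cW1r : ∀ (c : ℕ) (M : Matrix (Fin n) (Fin c) ℂ), W1 * (W1i * M) = M := by
    intro c M; rw [← Matrix.mul_assoc, iW1r, Matrix.one_mul]
  have cW1l : ∀ (c : ℕ) (M : Matrix (Fin n) (Fin c) ℂ), W1i * (W1 * M) = M := by
    intro c M; rw [← Matrix.mul_assoc, iW1l, Matrix.one_mul]
  have cOm1l : ∀ (c : ℕ) (M : Matrix (Fin n) (Fin c) ℂ), Om1i * (Om1 * M) = M := by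
    intro c M; rw [← Matrix.mul_assoc, iOm1l, Matrix.one_mul]
  have cOm1r : ∀ (c : ℕ) (M : Matrix (Fin n) (Fin c) ℂ), Om1 * (Om1i * M) = M := by
    intro c M; rw [← Matrix.mul_assoc, iOm1r, Matrix.one_mul]
  have ca1 : ∀ (c : ℕ) (M : Matrix (Fin m) (Fin c) ℂ), a1i * (a1 * M) = M := by
    intro c M; rw [← Matrix.mul_assoc, ia1, Matrix.one_mul]
  have ca1r : ∀ (c : ℕ) (M : Matrix (Fin m) (Fin c) ℂ), a1 * (a1i * M) = M := by
    intro c M; rw [← Matrix.mul_assoc, ia1r, Matrix.one_mul]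
  have cai : ∀ (c : ℕ) (M : Matrix (Fin m) (Fin c) ℂ), ai * (a * M) = M := by
    intro c M; rw [← Matrix.mul_assoc, ial, Matrix.one_mul]
  simp only [hGd, r1, r3, Matrix.mul_add, Matrix.add_mul, Matrix.mul_sub, Matrix.sub_mul,
    Matrix.mul_one, Matrix.one_mul, Matrix.mul_neg, Matrix.neg_mul, Matrix.mul_assoc,
    neg_neg, neg_sub, Matrix.zero_mul, zero_sub, Matrix.zero_mul,
    h1, h2, h3, h4, h5, h6, cW, cW1r, cW1l, cOm1l, cOm1r, ca1, ca1r, cai,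
    ial, ia1, ia1r, ia2, ia', iWl, iW1l, iW1r, iOm1l, iOm1r]
  abel


set_option maxHeartbeats 1000000 in
/-- binary Darboux transformation for the semi-discrete chiral model.
With `ω̃ (= om)` satisfying `ω̃_t = 0`, `ω̃_{,2} = ω̃` and `Q ω̃_{,1} = ω̃ P` (so `γ₁ = γ₂ = 0`),
the transformed function `g = (I − θ Ω̃_{,2}⁻¹ η) g₀`, if invertible, again satisfies the
semi-discrete chiral model equation. -/
theorem stmt_6 (m n : ℕ)
    (g₀ : ℝ → ℤ → ℤ → Matrix (Fin m) (Fin m) ℂ)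
    (hg₀inv : ∀ t j₁ j₂, IsUnit (g₀ t j₁ j₂))
    (hg₀diff : ∀ t j₁ j₂ (a b : Fin m), DifferentiableAt ℝ (fun s => g₀ s j₁ j₂ a b) t)
    (hseed : ∀ t j₁ j₂ (a b : Fin m),
      HasDerivAt (fun s => (g₀ s j₁ j₂ * (g₀ s (j₁ + 1) j₂)⁻¹) a b)
        ((g₀ t j₁ j₂ * (g₀ t j₁ (j₂ + 1))⁻¹
          - g₀ t (j₁ + 1) (j₂ - 1) * (g₀ t (j₁ + 1) j₂)⁻¹) a b) t)
    (P Q : ℝ → ℤ → ℤ → Matrix (Fin n) (Fin n) ℂ)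
    (hPt : ∀ t j₁ j₂ (a b : Fin n), HasDerivAt (fun s => P s j₁ j₂ a b) 0 t)
    (hP2 : ∀ t j₁ j₂, P t j₁ (j₂ + 1) = P t j₁ j₂)
    (hQt : ∀ t j₁ j₂ (a b : Fin n), HasDerivAt (fun s => Q s j₁ j₂ a b) 0 t)
    (hQ2 : ∀ t j₁ j₂, Q t j₁ (j₂ + 1) = Q t j₁ j₂)
    (om : ℝ → ℤ → ℤ → Matrix (Fin n) (Fin n) ℂ)
    (homt : ∀ t j₁ j₂ (a b : Fin n), HasDerivAt (fun s => om s j₁ j₂ a b) 0 t)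
    (hom2 : ∀ t j₁ j₂, om t j₁ (j₂ + 1) = om t j₁ j₂)
    (homPQ : ∀ t j₁ j₂, Q t j₁ j₂ * om t (j₁ + 1) j₂ = om t j₁ j₂ * P t j₁ j₂)
    (θ θt : ℝ → ℤ → ℤ → Matrix (Fin m) (Fin n) ℂ)
    (hθt : ∀ t j₁ j₂ (a : Fin m) (b : Fin n),
      HasDerivAt (fun s => θ s j₁ j₂ a b) (θt t j₁ j₂ a b) t)
    (hθ1 : ∀ t j₁ j₂, θ t j₁ (j₂ - 1)
      = -(θ t (j₁ - 1) j₂ * P t (j₁ - 1) j₂) - g₀ t (j₁ - 1) j₂ * (g₀ t j₁ j₂)⁻¹ * θ t j₁ j₂)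
    (hθ2 : ∀ t j₁ j₂, θt t j₁ j₂ = g₀ t j₁ j₂ * (g₀ t j₁ (j₂ + 1))⁻¹ * θ t j₁ (j₂ + 1))
    (η ηt : ℝ → ℤ → ℤ → Matrix (Fin n) (Fin m) ℂ)
    (hηt : ∀ t j₁ j₂ (a : Fin n) (b : Fin m),
      HasDerivAt (fun s => η s j₁ j₂ a b) (ηt t j₁ j₂ a b) t)
    (hη1 : ∀ t j₁ j₂, η t j₁ (j₂ + 1)
      = -(Q t j₁ j₂ * η t (j₁ + 1) j₂) - η t j₁ j₂ * (g₀ t j₁ j₂ * (g₀ t (j₁ + 1) j₂)⁻¹))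
    (hη2 : ∀ t j₁ j₂, ηt t j₁ j₂ = -((η t j₁ (j₂ - 1) * g₀ t j₁ (j₂ - 1)) * (g₀ t j₁ j₂)⁻¹))
    (Om Omt : ℝ → ℤ → ℤ → Matrix (Fin n) (Fin n) ℂ)
    (hOminv : ∀ t j₁ j₂, IsUnit (Om t j₁ j₂))
    (hOmt : ∀ t j₁ j₂ (a b : Fin n), HasDerivAt (fun s => Om s j₁ j₂ a b) (Omt t j₁ j₂ a b) t)
    (hOm1 : ∀ t j₁ j₂, Om t j₁ (j₂ + 1) - Om t j₁ j₂ = η t j₁ j₂ * θ t j₁ j₂)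
    (hOm2 : ∀ t j₁ j₂, Om t (j₁ + 1) (j₂ - 1) - (1 + Q t j₁ j₂) * Om t (j₁ + 1) j₂
        + Om t j₁ j₂ * P t j₁ j₂
        + (η t (j₁ + 1) (j₂ - 1) - η t j₁ j₂) * θ t (j₁ + 1) (j₂ - 1) = 0)
    (hOm3 : ∀ t j₁ j₂, Omt t j₁ j₂ = -(ηt t j₁ j₂ * θ t j₁ j₂))
    (g : ℝ → ℤ → ℤ → Matrix (Fin m) (Fin m) ℂ)
    (hg : ∀ t j₁ j₂, g t j₁ j₂
      = (1 - θ t j₁ j₂ * (Om t j₁ (j₂ + 1))⁻¹ * η t j₁ j₂) * g₀ t j₁ j₂)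
    (hginv : ∀ t j₁ j₂, IsUnit (g t j₁ j₂)) :
    ∀ t j₁ j₂ (a b : Fin m),
      HasDerivAt (fun s => (g s j₁ j₂ * (g s (j₁ + 1) j₂)⁻¹) a b)
        ((g t j₁ j₂ * (g t j₁ (j₂ + 1))⁻¹
          - g t (j₁ + 1) (j₂ - 1) * (g t (j₁ + 1) j₂)⁻¹) a b) t := by
  intro t j₁ j₂ a b
  -- index arithmetic
  have hi1 : j₂ + 1 - 1 = j₂ := add_sub_cancel_right j₂ 1
  have hi2 : j₂ - 1 + 1 = j₂ := sub_add_cancel j₂ 1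
  have hi3 : j₁ + 1 - 1 = j₁ := add_sub_cancel_right j₁ 1
  -- determinant units
  have du : ∀ j₁' j₂', IsUnit (g₀ t j₁' j₂').det :=
    fun j₁' j₂' => (Matrix.isUnit_iff_isUnit_det _).mp (hg₀inv t j₁' j₂')
  have duO : ∀ j₁' j₂', IsUnit (Om t j₁' j₂').det :=
    fun j₁' j₂' => (Matrix.isUnit_iff_isUnit_det _).mp (hOminv t j₁' j₂')
  -- derivative matrices for g₀
  have md0 : ∀ j₁' j₂', MD t (fun s => g₀ s j₁' j₂')
      (Matrix.of fun i j => deriv (fun s => g₀ s j₁' j₂' i j) t) :=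
    fun j₁' j₂' i j => (hg₀diff t j₁' j₂' i j).hasDerivAt
  -- derivative of g at each lattice point
  have mdg : ∀ j₁' j₂', MD t (fun s => g s j₁' j₂')
      ((0 - ((θt t j₁' j₂' * (Om t j₁' (j₂' + 1))⁻¹
            + θ t j₁' j₂' * -((Om t j₁' (j₂' + 1))⁻¹ * Omt t j₁' (j₂' + 1) * (Om t j₁' (j₂' + 1))⁻¹)) * η t j₁' j₂'
          + θ t j₁' j₂' * (Om t j₁' (j₂' + 1))⁻¹ * ηt t j₁' j₂')) * g₀ t j₁' j₂'
        + (1 - θ t j₁' j₂' * (Om t j₁' (j₂' + 1))⁻¹ * η t j₁' j₂')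
          * Matrix.of fun i j => deriv (fun s => g₀ s j₁' j₂' i j) t) := by
    intro j₁' j₂'
    have hθ' : MD t (fun s => θ s j₁' j₂') (θt t j₁' j₂') := hθt t j₁' j₂'
    have hη' : MD t (fun s => η s j₁' j₂') (ηt t j₁' j₂') := hηt t j₁' j₂'
    have hOm' : MD t (fun s => Om s j₁' (j₂' + 1)) (Omt t j₁' (j₂' + 1)) := hOmt t j₁' (j₂' + 1)
    have hWi : MD t (fun s => (Om s j₁' (j₂' + 1))⁻¹)
        (-((Om t j₁' (j₂' + 1))⁻¹ * Omt t j₁' (j₂' + 1) * (Om t j₁' (j₂' + 1))⁻¹)) :=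
      MD.inv (fun s => hOminv s j₁' (j₂' + 1)) hOm'
    have h1 : MD t (fun s => θ s j₁' j₂' * (Om s j₁' (j₂' + 1))⁻¹)
        (θt t j₁' j₂' * (Om t j₁' (j₂' + 1))⁻¹
          + θ t j₁' j₂' * -((Om t j₁' (j₂' + 1))⁻¹ * Omt t j₁' (j₂' + 1) * (Om t j₁' (j₂' + 1))⁻¹)) :=
      hθ'.mul hWi
    have h2 : MD t (fun s => θ s j₁' j₂' * (Om s j₁' (j₂' + 1))⁻¹ * η s j₁' j₂')
        ((θt t j₁' j₂' * (Om t j₁' (j₂' + 1))⁻¹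
          + θ t j₁' j₂' * -((Om t j₁' (j₂' + 1))⁻¹ * Omt t j₁' (j₂' + 1) * (Om t j₁' (j₂' + 1))⁻¹)) * η t j₁' j₂'
          + θ t j₁' j₂' * (Om t j₁' (j₂' + 1))⁻¹ * ηt t j₁' j₂') :=
      h1.mul hη'
    have h3 : MD t (fun s => 1 - θ s j₁' j₂' * (Om s j₁' (j₂' + 1))⁻¹ * η s j₁' j₂')
        (0 - ((θt t j₁' j₂' * (Om t j₁' (j₂' + 1))⁻¹
            + θ t j₁' j₂' * -((Om t j₁' (j₂' + 1))⁻¹ * Omt t j₁' (j₂' + 1) * (Om t j₁' (j₂' + 1))⁻¹)) * η t j₁' j₂'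
          + θ t j₁' j₂' * (Om t j₁' (j₂' + 1))⁻¹ * ηt t j₁' j₂')) :=
      (MD.const 1).sub h2
    have h4 := h3.mul (md0 j₁' j₂')
    intro i j
    refine (h4 i j).congr_of_eventuallyEq (Filter.Eventually.of_forall fun s => ?_)
    simp only [hg s j₁' j₂']
  have mdFull : MD t (fun s => g s j₁ j₂ * (g s (j₁ + 1) j₂)⁻¹)
      (((0 - ((θt t j₁ j₂ * (Om t j₁ (j₂ + 1))⁻¹
            + θ t j₁ j₂ * -((Om t j₁ (j₂ + 1))⁻¹ * Omt t j₁ (j₂ + 1) * (Om t j₁ (j₂ + 1))⁻¹)) * η t j₁ j₂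
          + θ t j₁ j₂ * (Om t j₁ (j₂ + 1))⁻¹ * ηt t j₁ j₂)) * g₀ t j₁ j₂
        + (1 - θ t j₁ j₂ * (Om t j₁ (j₂ + 1))⁻¹ * η t j₁ j₂)
          * Matrix.of fun i j => deriv (fun s => g₀ s j₁ j₂ i j) t) * (g t (j₁ + 1) j₂)⁻¹
      + g t j₁ j₂ * -((g t (j₁ + 1) j₂)⁻¹
          * ((0 - ((θt t (j₁ + 1) j₂ * (Om t (j₁ + 1) (j₂ + 1))⁻¹
            + θ t (j₁ + 1) j₂ * -((Om t (j₁ + 1) (j₂ + 1))⁻¹ * Omt t (j₁ + 1) (j₂ + 1) * (Om t (j₁ + 1) (j₂ + 1))⁻¹)) * η t (j₁ + 1) j₂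
          + θ t (j₁ + 1) j₂ * (Om t (j₁ + 1) (j₂ + 1))⁻¹ * ηt t (j₁ + 1) j₂)) * g₀ t (j₁ + 1) j₂
        + (1 - θ t (j₁ + 1) j₂ * (Om t (j₁ + 1) (j₂ + 1))⁻¹ * η t (j₁ + 1) j₂)
          * Matrix.of fun i j => deriv (fun s => g₀ s (j₁ + 1) j₂ i j) t)
          * (g t (j₁ + 1) j₂)⁻¹)) :=
    (mdg j₁ j₂).mul (MD.inv (fun s => hginv s (j₁ + 1) j₂) (mdg (j₁ + 1) j₂))

  -- explicit inverse formulas for g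
  have hp1 := inv_pair m n (g₀ t (j₁ + 1) j₂) (g₀ t (j₁ + 1) j₂)⁻¹
    (Om t (j₁ + 1) (j₂ + 1)) (Om t (j₁ + 1) j₂) (Om t (j₁ + 1) (j₂ + 1))⁻¹ (Om t (j₁ + 1) j₂)⁻¹
    (θ t (j₁ + 1) j₂) (η t (j₁ + 1) j₂)
    (Matrix.mul_nonsing_inv _ (du (j₁ + 1) j₂))
    (Matrix.nonsing_inv_mul _ (duO (j₁ + 1) (j₂ + 1)))
    (Matrix.mul_nonsing_inv _ (duO (j₁ + 1) j₂))
    (hOm1 t (j₁ + 1) j₂)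
  have hG1 : (g t (j₁ + 1) j₂)⁻¹
      = (g₀ t (j₁ + 1) j₂)⁻¹ * (1 + θ t (j₁ + 1) j₂ * (Om t (j₁ + 1) j₂)⁻¹ * η t (j₁ + 1) j₂) := by
    rw [hg t (j₁ + 1) j₂]; exact Matrix.inv_eq_right_inv hp1
  have hp2 := inv_pair m n (g₀ t j₁ (j₂ + 1)) (g₀ t j₁ (j₂ + 1))⁻¹
    (Om t j₁ (j₂ + 1 + 1)) (Om t j₁ (j₂ + 1)) (Om t j₁ (j₂ + 1 + 1))⁻¹ (Om t j₁ (j₂ + 1))⁻¹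
    (θ t j₁ (j₂ + 1)) (η t j₁ (j₂ + 1))
    (Matrix.mul_nonsing_inv _ (du j₁ (j₂ + 1)))
    (Matrix.nonsing_inv_mul _ (duO j₁ (j₂ + 1 + 1)))
    (Matrix.mul_nonsing_inv _ (duO j₁ (j₂ + 1)))
    (hOm1 t j₁ (j₂ + 1))
  have hG2 : (g t j₁ (j₂ + 1))⁻¹
      = (g₀ t j₁ (j₂ + 1))⁻¹ * (1 + θ t j₁ (j₂ + 1) * (Om t j₁ (j₂ + 1))⁻¹ * η t j₁ (j₂ + 1)) := by
    rw [hg t j₁ (j₂ + 1)]; exact Matrix.inv_eq_right_inv hp2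
  -- seed equation in matrix form
  have mdseed : MD t (fun s => g₀ s j₁ j₂ * (g₀ s (j₁ + 1) j₂)⁻¹)
      ((Matrix.of fun i j => deriv (fun s => g₀ s j₁ j₂ i j) t) * (g₀ t (j₁ + 1) j₂)⁻¹
        + g₀ t j₁ j₂ * -((g₀ t (j₁ + 1) j₂)⁻¹
            * (Matrix.of fun i j => deriv (fun s => g₀ s (j₁ + 1) j₂ i j) t)
            * (g₀ t (j₁ + 1) j₂)⁻¹)) :=
    (md0 j₁ j₂).mul (MD.inv (fun s => hg₀inv s (j₁ + 1) j₂) (md0 (j₁ + 1) j₂))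
  have hseedEq := Matrix.ext (fun i j => HasDerivAt.unique (mdseed i j) (hseed t j₁ j₂ i j))
  have hGdrel : (Matrix.of fun i j => deriv (fun s => g₀ s j₁ j₂ i j) t)
      = g₀ t j₁ j₂ * ((g₀ t (j₁ + 1) j₂)⁻¹ * (Matrix.of fun i j => deriv (fun s => g₀ s (j₁ + 1) j₂ i j) t))
        + (g₀ t j₁ j₂ * ((g₀ t j₁ (j₂ + 1))⁻¹ * g₀ t (j₁ + 1) j₂) - g₀ t (j₁ + 1) (j₂ - 1)) := by
    have h := congrArg (fun X => X * g₀ t (j₁ + 1) j₂) hseedEq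
    simp only [Matrix.add_mul, Matrix.sub_mul, Matrix.neg_mul, Matrix.mul_neg, Matrix.mul_assoc,
      Matrix.nonsing_inv_mul _ (du (j₁ + 1) j₂), Matrix.mul_one] at h
    rw [← h]
    abel
  -- concrete relation facts
  have hQm : Q t j₁ j₂ = Q t j₁ (j₂ - 1) := by
    have h := hQ2 t j₁ (j₂ - 1); rwa [hi2] at h
  have r1c := hη1 t j₁ j₂
  have r2c : η t j₁ j₂ = -(Q t j₁ j₂ * η t (j₁ + 1) (j₂ - 1))
      - η t j₁ (j₂ - 1) * (g₀ t j₁ (j₂ - 1) * (g₀ t (j₁ + 1) (j₂ - 1))⁻¹) := by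
    have h := hη1 t j₁ (j₂ - 1)
    rw [hi2, ← hQm] at h
    exact h
  have r3c : θ t (j₁ + 1) (j₂ - 1) = -(θ t j₁ j₂ * P t j₁ j₂)
      - g₀ t j₁ j₂ * ((g₀ t (j₁ + 1) j₂)⁻¹ * θ t (j₁ + 1) j₂) := by
    have h := hθ1 t (j₁ + 1) j₂
    simp only [hi3] at h
    rw [Matrix.mul_assoc (g₀ t j₁ j₂)] at h
    exact h
  have r4c : θ t (j₁ + 1) j₂ = -(θ t j₁ (j₂ + 1) * P t j₁ j₂)
      - g₀ t j₁ (j₂ + 1) * ((g₀ t (j₁ + 1) (j₂ + 1))⁻¹ * θ t (j₁ + 1) (j₂ + 1)) := by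
    have h := hθ1 t (j₁ + 1) (j₂ + 1)
    simp only [hi1, hi3, hP2 t j₁ j₂] at h
    rw [Matrix.mul_assoc (g₀ t j₁ (j₂ + 1))] at h
    exact h
  have r7c : Om t (j₁ + 1) j₂ - Om t (j₁ + 1) (j₂ - 1)
      = η t (j₁ + 1) (j₂ - 1) * θ t (j₁ + 1) (j₂ - 1) := by
    have h := hOm1 t (j₁ + 1) (j₂ - 1)
    rwa [hi2] at h
  -- the final algebraic identity
  have final :
      ((0 - ((θt t j₁ j₂ * (Om t j₁ (j₂ + 1))⁻¹
            + θ t j₁ j₂ * -((Om t j₁ (j₂ + 1))⁻¹ * Omt t j₁ (j₂ + 1) * (Om t j₁ (j₂ + 1))⁻¹)) * η t j₁ j₂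
          + θ t j₁ j₂ * (Om t j₁ (j₂ + 1))⁻¹ * ηt t j₁ j₂)) * g₀ t j₁ j₂
        + (1 - θ t j₁ j₂ * (Om t j₁ (j₂ + 1))⁻¹ * η t j₁ j₂)
          * Matrix.of fun i j => deriv (fun s => g₀ s j₁ j₂ i j) t) * (g t (j₁ + 1) j₂)⁻¹
      + g t j₁ j₂ * -((g t (j₁ + 1) j₂)⁻¹
          * ((0 - ((θt t (j₁ + 1) j₂ * (Om t (j₁ + 1) (j₂ + 1))⁻¹
            + θ t (j₁ + 1) j₂ * -((Om t (j₁ + 1) (j₂ + 1))⁻¹ * Omt t (j₁ + 1) (j₂ + 1) * (Om t (j₁ + 1) (j₂ + 1))⁻¹)) * η t (j₁ + 1) j₂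
          + θ t (j₁ + 1) j₂ * (Om t (j₁ + 1) (j₂ + 1))⁻¹ * ηt t (j₁ + 1) j₂)) * g₀ t (j₁ + 1) j₂
        + (1 - θ t (j₁ + 1) j₂ * (Om t (j₁ + 1) (j₂ + 1))⁻¹ * η t (j₁ + 1) j₂)
          * Matrix.of fun i j => deriv (fun s => g₀ s (j₁ + 1) j₂ i j) t)
          * (g t (j₁ + 1) j₂)⁻¹)
      = g t j₁ j₂ * (g t j₁ (j₂ + 1))⁻¹ - g t (j₁ + 1) (j₂ - 1) * (g t (j₁ + 1) j₂)⁻¹ := by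
    rw [hG1, hG2, hg t j₁ j₂, hg t (j₁ + 1) (j₂ - 1)]
    rw [hθ2 t j₁ j₂, hθ2 t (j₁ + 1) j₂, hOm3 t j₁ (j₂ + 1), hOm3 t (j₁ + 1) (j₂ + 1),
      hη2 t j₁ j₂, hη2 t (j₁ + 1) j₂, hη2 t j₁ (j₂ + 1), hη2 t (j₁ + 1) (j₂ + 1)]
    simp only [hi1, hi2]
    refine cancel_right _ _ hp1 ?_
    exact key_alg' m n (g₀ t j₁ j₂) (g₀ t (j₁ + 1) j₂) (g₀ t j₁ (j₂ + 1)) (g₀ t (j₁ + 1) (j₂ - 1))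
      (g₀ t j₁ (j₂ - 1))
      (g₀ t j₁ j₂)⁻¹ (g₀ t (j₁ + 1) j₂)⁻¹ (g₀ t j₁ (j₂ + 1))⁻¹ (g₀ t (j₁ + 1) (j₂ + 1))⁻¹
      (g₀ t (j₁ + 1) (j₂ - 1))⁻¹
      (Matrix.of fun i j => deriv (fun s => g₀ s j₁ j₂ i j) t)
      (Matrix.of fun i j => deriv (fun s => g₀ s (j₁ + 1) j₂ i j) t)
      (Om t j₁ (j₂ + 1)) (Om t (j₁ + 1) (j₂ + 1)) (Om t j₁ j₂) (Om t (j₁ + 1) j₂)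
      (Om t (j₁ + 1) (j₂ - 1))
      (Om t j₁ (j₂ + 1))⁻¹ (Om t (j₁ + 1) (j₂ + 1))⁻¹ (Om t (j₁ + 1) j₂)⁻¹
      (P t j₁ j₂) (Q t j₁ j₂)
      (θ t j₁ j₂) (θ t (j₁ + 1) j₂) (θ t j₁ (j₂ + 1)) (θ t (j₁ + 1) (j₂ + 1)) (θ t (j₁ + 1) (j₂ - 1))
      (η t j₁ j₂) (η t (j₁ + 1) j₂) (η t j₁ (j₂ + 1)) (η t (j₁ + 1) (j₂ - 1)) (η t j₁ (j₂ - 1))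
      (Matrix.nonsing_inv_mul _ (duO j₁ (j₂ + 1)))
      (Matrix.nonsing_inv_mul _ (duO (j₁ + 1) (j₂ + 1)))
      (Matrix.mul_nonsing_inv _ (duO (j₁ + 1) (j₂ + 1)))
      (Matrix.nonsing_inv_mul _ (duO (j₁ + 1) j₂))
      (Matrix.mul_nonsing_inv _ (duO (j₁ + 1) j₂))
      (Matrix.nonsing_inv_mul _ (du j₁ j₂))
      (Matrix.nonsing_inv_mul _ (du (j₁ + 1) j₂))
      (Matrix.mul_nonsing_inv _ (du (j₁ + 1) j₂))
      (Matrix.nonsing_inv_mul _ (du j₁ (j₂ + 1)))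
      (Matrix.nonsing_inv_mul _ (du (j₁ + 1) (j₂ - 1)))
      r1c r2c r3c r4c (hOm1 t j₁ j₂) (hOm1 t (j₁ + 1) j₂) r7c (hOm2 t j₁ j₂) hGdrel
  have hD := mdFull a b
  rw [final] at hD
  exact hD
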